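/- Let α > 0 and let ξ₁, ξ₂ ∈ ℝ with ξ₁ ≠ 0, ξ₂ ≠ 0, and ξ₁ + ξ₂ ≠ 0. Then the dispersive part of the resonance function has the same sign as ξ₁ξ₂(ξ₁+ξ₂); that is, ( |ξ₁+ξ₂|^α(ξ₁+ξ₂) - |ξ₁|^α ξ₁ - |ξ₂|^α ξ₂ ) · ( ξ₁ ξ₂ (ξ₁+ξ₂) ) ≥ 0. Consequently, the two terms |ξ₁+ξ₂|^α(ξ₁+ξ₂) - |ξ₁|^α ξ₁ - |ξ₂|^α ξ₂ and (η₁ξ₂ - η₂ξ₁)²/(ξ₁ξ₂(ξ₁+ξ₂)) have the same sign for any η₁, η₂ ∈ ℝ, so they can cancel in the resonance function Ω_α. -/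

import Mathlib

/-- Superadditivity of `x ↦ |x|^α * x` on positive reals. -/
lemma aux_key19 (α a b : ℝ) (hα : 0 < α) (ha : 0 < a) (hb : 0 < b) :
    |a| ^ α * a + |b| ^ α * b ≤ |a + b| ^ α * (a + b) := by
  have hab : 0 < a + b := by linarith
  rw [abs_of_pos ha, abs_of_pos hb, abs_of_pos hab]
  have h1 : a ^ α ≤ (a + b) ^ α := Real.rpow_le_rpow ha.le (by linarith) hα.le
  have h2 : b ^ α ≤ (a + b) ^ α := Real.rpow_le_rpow hb.le (by linarith) hα.le
  nlinarith [Real.rpow_pos_of_pos ha α, Real.rpow_pos_of_pos hb α]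

/-- the dispersive part `|ξ₁+ξ₂|^α(ξ₁+ξ₂) - |ξ₁|^α ξ₁ - |ξ₂|^α ξ₂` of the
resonance function has the same sign as `ξ₁ξ₂(ξ₁+ξ₂)`; consequently it has the same sign
as the transverse part `(η₁ξ₂ - η₂ξ₁)²/(ξ₁ξ₂(ξ₁+ξ₂))` for any `η₁, η₂`. -/
theorem statement19 (α ξ₁ ξ₂ : ℝ) (hα : 0 < α) (h₁ : ξ₁ ≠ 0) (h₂ : ξ₂ ≠ 0)
    (h₃ : ξ₁ + ξ₂ ≠ 0) :
    0 ≤ (|ξ₁ + ξ₂| ^ α * (ξ₁ + ξ₂) - |ξ₁| ^ α * ξ₁ - |ξ₂| ^ α * ξ₂) *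
        (ξ₁ * ξ₂ * (ξ₁ + ξ₂)) ∧
      ∀ η₁ η₂ : ℝ,
        0 ≤ (|ξ₁ + ξ₂| ^ α * (ξ₁ + ξ₂) - |ξ₁| ^ α * ξ₁ - |ξ₂| ^ α * ξ₂) *
          ((η₁ * ξ₂ - η₂ * ξ₁) ^ 2 / (ξ₁ * ξ₂ * (ξ₁ + ξ₂))) := by
  set D := |ξ₁ + ξ₂| ^ α * (ξ₁ + ξ₂) - |ξ₁| ^ α * ξ₁ - |ξ₂| ^ α * ξ₂ with hD
  have hP : ξ₁ * ξ₂ * (ξ₁ + ξ₂) ≠ 0 := by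
    exact mul_ne_zero (mul_ne_zero h₁ h₂) h₃
  have main : 0 ≤ D * (ξ₁ * ξ₂ * (ξ₁ + ξ₂)) := by
    rcases lt_or_gt_of_ne h₁ with h1 | h1 <;>
    rcases lt_or_gt_of_ne h₂ with h2 | h2 <;>
    rcases lt_or_gt_of_ne h₃ with h3 | h3
    · -- ξ₁<0, ξ₂<0, s<0 : D ≤ 0, P ≤ 0
      have k := aux_key19 α (-ξ₁) (-ξ₂) hα (by linarith) (by linarith)
      rw [show -ξ₁ + -ξ₂ = -(ξ₁ + ξ₂) by ring] at k
      simp only [abs_neg, mul_neg] at k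
      have hd : D ≤ 0 := by simp only [hD]; linarith
      have hp : ξ₁ * ξ₂ * (ξ₁ + ξ₂) ≤ 0 := by nlinarith [mul_pos_of_neg_of_neg h1 h2]
      exact mul_nonneg_of_nonpos_of_nonpos hd hp
    · exact absurd h3 (by linarith)
    · -- ξ₁<0, ξ₂>0, s<0 : 0 ≤ D, 0 ≤ P
      have k := aux_key19 α (-(ξ₁ + ξ₂)) ξ₂ hα (by linarith) h2
      rw [show -(ξ₁ + ξ₂) + ξ₂ = -ξ₁ by ring] at k
      simp only [abs_neg, mul_neg] at k
      have hd : 0 ≤ D := by simp only [hD]; linarith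
      have hp : 0 ≤ ξ₁ * ξ₂ * (ξ₁ + ξ₂) := by nlinarith [mul_neg_of_neg_of_pos h1 h2]
      exact mul_nonneg hd hp
    · -- ξ₁<0, ξ₂>0, s>0 : D ≤ 0, P ≤ 0
      have k := aux_key19 α (-ξ₁) (ξ₁ + ξ₂) hα (by linarith) h3
      rw [show -ξ₁ + (ξ₁ + ξ₂) = ξ₂ by ring] at k
      simp only [abs_neg, mul_neg] at k
      have hd : D ≤ 0 := by simp only [hD]; linarith
      have hp : ξ₁ * ξ₂ * (ξ₁ + ξ₂) ≤ 0 := by nlinarith [mul_neg_of_neg_of_pos h1 h2]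
      exact mul_nonneg_of_nonpos_of_nonpos hd hp
    · -- ξ₁>0, ξ₂<0, s<0 : 0 ≤ D, 0 ≤ P
      have k := aux_key19 α ξ₁ (-(ξ₁ + ξ₂)) hα h1 (by linarith)
      rw [show ξ₁ + -(ξ₁ + ξ₂) = -ξ₂ by ring] at k
      simp only [abs_neg, mul_neg] at k
      have hd : 0 ≤ D := by simp only [hD]; linarith
      have hp : 0 ≤ ξ₁ * ξ₂ * (ξ₁ + ξ₂) := by nlinarith [mul_neg_of_pos_of_neg h1 h2]
      exact mul_nonneg hd hp
    · -- ξ₁>0, ξ₂<0, s>0 : D ≤ 0, P ≤ 0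
      have k := aux_key19 α (ξ₁ + ξ₂) (-ξ₂) hα h3 (by linarith)
      rw [show (ξ₁ + ξ₂) + -ξ₂ = ξ₁ by ring] at k
      simp only [abs_neg, mul_neg] at k
      have hd : D ≤ 0 := by simp only [hD]; linarith
      have hp : ξ₁ * ξ₂ * (ξ₁ + ξ₂) ≤ 0 := by nlinarith [mul_neg_of_pos_of_neg h1 h2]
      exact mul_nonneg_of_nonpos_of_nonpos hd hp
    · exact absurd h3 (by linarith)
    · -- ξ₁>0, ξ₂>0 : 0 ≤ D, 0 ≤ P
      have k := aux_key19 α ξ₁ ξ₂ hα h1 h2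
      have hd : 0 ≤ D := by simp only [hD]; linarith
      have hp : 0 ≤ ξ₁ * ξ₂ * (ξ₁ + ξ₂) := by positivity
      exact mul_nonneg hd hp
  refine ⟨main, fun η₁ η₂ => ?_⟩
  have heq : D * ((η₁ * ξ₂ - η₂ * ξ₁) ^ 2 / (ξ₁ * ξ₂ * (ξ₁ + ξ₂)))
      = (D * (ξ₁ * ξ₂ * (ξ₁ + ξ₂))) * (η₁ * ξ₂ - η₂ * ξ₁) ^ 2
        / (ξ₁ * ξ₂ * (ξ₁ + ξ₂)) ^ 2 := by
    field_simp
  rw [heq]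
  positivity
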